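/- There exists K such that the following holds for all k ≥ K. Let 100·ln k ≤ r ≤ 2+2√(k·ln k), n = 2k+r, and d = \binom{k+r-1}{k-1}. Let a, g be integers with 1 ≤ a ≤ \binom{2k+⌊3r/4⌋}{k+r-1} and d ≤ g ≤ d³, and let G(a,g) := { A ⊆ L_{k+r−1} : A is 2-linked, |[A]| = a, |N(A)| = g }. Then |G(a,g)| ≤ 2^{g/2}. -/

import Mathlib

open Finset

/-- The bipartite graph `H` on subsets of `Fin m`: two sets are adjacent iff one
has size k-1, the other size k+r-1, and one contains the other. -/
def Hgraph (m k r : ℕ) : SimpleGraph (Finset (Fin m)) where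
  Adj A B := A ≠ B ∧ ((A.card = k - 1 ∧ B.card = k + r - 1 ∧ A ⊆ B) ∨
    (B.card = k - 1 ∧ A.card = k + r - 1 ∧ B ⊆ A))
  symm := ⟨fun _ _ h => ⟨h.1.symm, h.2.symm⟩⟩
  loopless := ⟨fun _ h => h.1 rfl⟩

/-- `distLE G m u v` : there is a walk of length at most `m` from `u` to `v`. -/
def distLE {V : Type} (G : SimpleGraph V) (m : ℕ) (u v : V) : Prop :=
  ∃ p : G.Walk u v, p.length ≤ m

/-- `MLinked G m A` : the set `A` is `m`-linked. -/
def MLinked {V : Type} (G : SimpleGraph V) (m : ℕ) (A : Finset V) : Prop :=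
  ∀ u ∈ A, ∀ v ∈ A,
    Relation.ReflTransGen (fun a b => a ∈ A ∧ b ∈ A ∧ distLE G m a b) u v

/-- The neighborhood in `H` of a family `A ⊆ L_{k+r-1}`: its (k-1)-shadow. -/
def nbhdH (m k : ℕ) (A : Finset (Finset (Fin m))) : Finset (Finset (Fin m)) :=
  A.biUnion fun S => Finset.powersetCard (k - 1) S

/-- The closure `[A] = {v ∈ L_{k+r-1} : N(v) ⊆ N(A)}` of `A ⊆ L_{k+r-1}`. -/
def closureH (m k r : ℕ) (A : Finset (Finset (Fin m))) : Finset (Finset (Fin m)) :=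
  Finset.univ.filter fun v : Finset (Fin m) =>
    v.card = k + r - 1 ∧ Finset.powersetCard (k - 1) v ⊆ nbhdH m k A

open scoped FinsetFamily

section Reach

variable {V : Type}

/-- `reachN r v0 n u`: `u` is reachable from `v0` in exactly `n` steps of `r`. -/
def reachN (r : V → V → Prop) (v0 : V) : ℕ → V → Prop
  | 0, u => u = v0
  | (n+1), u => ∃ p, reachN r v0 n p ∧ r p u

lemma exists_reachN_of_reflTransGen {r : V → V → Prop} {v0 u : V}
    (h : Relation.ReflTransGen r v0 u) : ∃ n, reachN r v0 n u := by
  induction h with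
  | refl => exact ⟨0, rfl⟩
  | tail _ hstep ih =>
    obtain ⟨n, hn⟩ := ih
    exact ⟨n + 1, _, hn, hstep⟩

lemma leaf_removal [DecidableEq V] {R : V → V → Prop} (hsym : Symmetric R)
    {A : Finset V} {v0 : V} (hv0 : v0 ∈ A) (h2 : 2 ≤ A.card)
    (hconn : ∀ u ∈ A, ∀ v ∈ A,
      Relation.ReflTransGen (fun a b => a ∈ A ∧ b ∈ A ∧ R a b) u v) :
    ∃ w ∈ A, w ≠ v0 ∧ (∃ u ∈ A.erase w, R u w) ∧
      (∀ u ∈ A.erase w, ∀ v ∈ A.erase w,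
        Relation.ReflTransGen (fun a b => a ∈ A.erase w ∧ b ∈ A.erase w ∧ R a b) u v) := by
  set r' : V → V → Prop := fun a b => a ∈ A ∧ b ∈ A ∧ R a b with hr'
  have hre : ∀ u ∈ A, ∃ n, reachN r' v0 n u := fun u hu =>
    exists_reachN_of_reflTransGen (hconn v0 hv0 u hu)
  set dist : V → ℕ := fun u => sInf {n | reachN r' v0 n u} with hdist
  have hmem : ∀ u ∈ A, reachN r' v0 (dist u) u := fun u hu => Nat.sInf_mem (hre u hu)
  have hdist_le : ∀ u n, reachN r' v0 n u → dist u ≤ n := fun u n h => Nat.sInf_le h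
  obtain ⟨w, hw, hmax⟩ := A.exists_max_image dist ⟨v0, hv0⟩
  have hdv0 : dist v0 = 0 := Nat.le_zero.1 (hdist_le v0 0 rfl)
  obtain ⟨u0, hu0, hu0ne⟩ := Finset.exists_mem_ne (lt_of_lt_of_le one_lt_two h2) v0
  have hdu0 : 1 ≤ dist u0 := by
    rcases Nat.eq_zero_or_pos (dist u0) with h0 | h1
    · exact absurd (by have := hmem u0 hu0; rwa [h0] at this) hu0ne
    · exact h1
  have hdw : 1 ≤ dist w := le_trans hdu0 (hmax u0 hu0)
  have hwv0 : w ≠ v0 := fun h => by rw [h, hdv0] at hdw; omega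
  -- the key claim by strong induction
  have key : ∀ n u, u ∈ A → u ≠ w → dist u = n →
      Relation.ReflTransGen (fun a b => a ∈ A.erase w ∧ b ∈ A.erase w ∧ R a b) v0 u := by
    intro n
    induction n using Nat.strong_induction_on with
    | _ n ih =>
      intro u hu hune hdeq
      cases n with
      | zero =>
        have : u = v0 := by have := hmem u hu; rwa [hdeq] at this
        rw [this]
      | succ m =>
        have hrch := hmem u hu
        rw [hdeq] at hrch
        obtain ⟨p, hp, hrel⟩ := hrch
        have hpA : p ∈ A := hrel.1
        have hdp : dist p ≤ m := hdist_le p m hp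
        have hpw : p ≠ w := by
          intro h
          have h1 : dist u ≤ dist w := hmax u hu
          rw [← h, hdeq] at h1
          omega
        have hbase := ih (dist p) (by omega) p hpA hpw rfl
        exact hbase.tail ⟨Finset.mem_erase.2 ⟨hpw, hpA⟩, Finset.mem_erase.2 ⟨hune, hu⟩, hrel.2.2⟩
  -- neighbour of w in the erased set
  have hnbr : ∃ u ∈ A.erase w, R u w := by
    have hrch := hmem w hw
    rcases Nat.exists_eq_add_of_le hdw with ⟨m, hm⟩
    rw [hm, Nat.add_comm] at hrch
    obtain ⟨p, hp, hrel⟩ := hrch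
    have hpA : p ∈ A := hrel.1
    have hpw : p ≠ w := by
      intro h
      have := hdist_le p m hp
      rw [h] at this
      omega
    exact ⟨p, Finset.mem_erase.2 ⟨hpw, hpA⟩, hrel.2.2⟩
  refine ⟨w, hw, hwv0, hnbr, ?_⟩
  intro u hu v hv
  have hsym' : Symmetric (fun a b => a ∈ A.erase w ∧ b ∈ A.erase w ∧ R a b) :=
    fun a b ⟨ha, hb, hab⟩ => ⟨hb, ha, hsym hab⟩
  have h1 := key (dist u) u (Finset.mem_of_mem_erase hu) (Finset.ne_of_mem_erase hu) rfl
  have h2' := key (dist v) v (Finset.mem_of_mem_erase hv) (Finset.ne_of_mem_erase hv) rfl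
  exact (haveI : Std.Symm (fun a b => a ∈ A.erase w ∧ b ∈ A.erase w ∧ R a b) := ⟨fun a b h => hsym' h⟩
    Relation.ReflTransGen.symmetric.symm _ _ h1).trans h2'

end Reach

section Count

open scoped Classical in
/-- The families of size `t+1` containing `v0`, with all elements satisfying `Q`,
that are connected under `R`. -/
noncomputable def connFam {V : Type} [Fintype V] (R : V → V → Prop) (Q : V → Prop)
    (v0 : V) (t : ℕ) : Finset (Finset V) :=
  Finset.univ.filter fun A => v0 ∈ A ∧ A.card = t + 1 ∧ (∀ x ∈ A, Q x) ∧
    ∀ u ∈ A, ∀ v ∈ A, Relation.ReflTransGen (fun a b => a ∈ A ∧ b ∈ A ∧ R a b) u v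

lemma connFam_card_le {V : Type} [Fintype V] [DecidableEq V] {R : V → V → Prop}
    (hsym : Symmetric R) {Q : V → Prop} {B : V → Finset V}
    (hB : ∀ u w, Q u → Q w → R u w → w ∈ B u)
    {D : ℕ} (hD : ∀ u, Q u → (B u).card ≤ D) (v0 : V) :
    ∀ t : ℕ, (connFam R Q v0 t).card ≤ (t * D) ^ t := by
  classical
  intro t
  induction t with
  | zero =>
    have hsub : connFam R Q v0 0 ⊆ {({v0} : Finset V)} := by
      intro A hA
      simp only [connFam, Finset.mem_filter] at hA
      obtain ⟨-, hv0, hcard, -⟩ := hA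
      obtain ⟨b, hb⟩ := Finset.card_eq_one.1 hcard
      rw [Finset.mem_singleton]
      rw [hb] at hv0 ⊢
      rw [Finset.mem_singleton] at hv0
      rw [hv0]
    simpa using Finset.card_le_card hsub
  | succ t ih =>
    have hsub : connFam R Q v0 (t + 1) ⊆
        (connFam R Q v0 t).biUnion fun A' => (A'.biUnion B).image fun w => insert w A' := by
      intro A hA
      simp only [connFam, Finset.mem_filter] at hA
      obtain ⟨-, hv0, hcard, hQ, hconn⟩ := hA
      obtain ⟨w, hw, hwv0, ⟨u, hu, hRuw⟩, hconn'⟩ :=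
        leaf_removal hsym hv0 (by omega) hconn
      refine Finset.mem_biUnion.2 ⟨A.erase w, ?_, ?_⟩
      · simp only [connFam, Finset.mem_filter]
        refine ⟨Finset.mem_univ _, Finset.mem_erase.2 ⟨Ne.symm hwv0, hv0⟩, ?_, ?_, hconn'⟩
        · rw [Finset.card_erase_of_mem hw, hcard]; omega
        · exact fun x hx => hQ x (Finset.mem_of_mem_erase hx)
      · refine Finset.mem_image.2 ⟨w, ?_, Finset.insert_erase hw⟩
        exact Finset.mem_biUnion.2 ⟨u, hu,
          hB u w (hQ u (Finset.mem_of_mem_erase hu)) (hQ w hw) hRuw⟩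
    calc (connFam R Q v0 (t + 1)).card
        ≤ ((connFam R Q v0 t).biUnion fun A' => (A'.biUnion B).image fun w => insert w A').card :=
          Finset.card_le_card hsub
      _ ≤ ∑ A' ∈ connFam R Q v0 t, ((A'.biUnion B).image fun w => insert w A').card :=
          Finset.card_biUnion_le
      _ ≤ ∑ A' ∈ connFam R Q v0 t, (t + 1) * D := by
          refine Finset.sum_le_sum fun A' hA' => ?_
          simp only [connFam, Finset.mem_filter] at hA'
          obtain ⟨-, -, hcard, hQ', -⟩ := hA'
          calc ((A'.biUnion B).image fun w => insert w A').card
              ≤ (A'.biUnion B).card := Finset.card_image_le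
            _ ≤ ∑ u ∈ A', (B u).card := Finset.card_biUnion_le
            _ ≤ ∑ _u ∈ A', D := Finset.sum_le_sum fun u hu => hD u (hQ' u hu)
            _ = (t + 1) * D := by rw [Finset.sum_const, hcard, smul_eq_mul]
      _ = (connFam R Q v0 t).card * ((t + 1) * D) := by rw [Finset.sum_const, smul_eq_mul]
      _ ≤ (t * D) ^ t * ((t + 1) * D) := by
          exact Nat.mul_le_mul_right _ ih
      _ ≤ ((t + 1) * D) ^ t * ((t + 1) * D) := by
          exact Nat.mul_le_mul_right _ (Nat.pow_le_pow_left (Nat.mul_le_mul_right _ (by omega)) _)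
      _ = ((t + 1) * D) ^ (t + 1) := by ring

end Count

section Choose

/-- Climbing lemma for binomial coefficients. -/
lemma choose_climb (n b : ℕ) : ∀ (c j : ℕ), (∀ i, j ≤ i → i < j + c → b * (i + 1) ≤ n - i) →
    b ^ c * n.choose j ≤ n.choose (j + c) := by
  intro c
  induction c with
  | zero => intro j _; simpa using Nat.le_refl _
  | succ c ih =>
    intro j hstep
    have h1 : b ^ c * n.choose j ≤ n.choose (j + c) :=
      ih j fun i hi1 hi2 => hstep i hi1 (by omega)
    have h2 : b * n.choose (j + c) ≤ n.choose (j + c + 1) := by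
      have heq := Nat.choose_succ_right_eq n (j + c)
      have hb : b * (j + c + 1) ≤ n - (j + c) := hstep (j + c) (by omega) (by omega)
      have : b * n.choose (j + c) * (j + c + 1) ≤ n.choose (j + c + 1) * (j + c + 1) := by
        rw [heq]
        calc b * n.choose (j + c) * (j + c + 1) = n.choose (j + c) * (b * (j + c + 1)) := by ring
          _ ≤ n.choose (j + c) * (n - (j + c)) := Nat.mul_le_mul_left _ hb
      exact Nat.le_of_mul_le_mul_right this (by omega)
    calc b ^ (c + 1) * n.choose j = b * (b ^ c * n.choose j) := by ring
      _ ≤ b * n.choose (j + c) := Nat.mul_le_mul_left _ h1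
      _ ≤ n.choose (j + c + 1) := h2
      _ = n.choose (j + (c + 1)) := by rw [Nat.add_assoc]

end Choose

section ShadowId

/-- `nbhdH` is the `r`-iterated shadow for a family of `(k+r-1)`-sets. -/
lemma nbhdH_eq_iter_shadow {m k r : ℕ} (hk : 1 ≤ k) {A : Finset (Finset (Fin m))}
    (hA : ∀ S ∈ A, S.card = k + r - 1) : nbhdH m k A = ∂^[r] A := by
  ext T
  rw [Finset.mem_shadow_iterate_iff_exists_sdiff]
  simp only [nbhdH, Finset.mem_biUnion, Finset.mem_powersetCard]
  constructor
  · rintro ⟨S, hS, hTS, hTcard⟩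
    refine ⟨S, hS, hTS, ?_⟩
    rw [Finset.card_sdiff_of_subset hTS, hA S hS, hTcard]
    omega
  · rintro ⟨S, hS, hTS, hcard⟩
    refine ⟨S, hS, hTS, ?_⟩
    have h1 : (S \ T).card = S.card - T.card := by rw [Finset.card_sdiff_of_subset hTS]
    have h2 : T.card ≤ S.card := Finset.card_le_card hTS
    rw [hA S hS] at h1 h2
    omega

/-- Kruskal–Katona lower bound on `nbhdH`. -/
lemma shadow_lb {m k r : ℕ} (hk : 1 ≤ k) (hr : 1 ≤ r) {A : Finset (Finset (Fin m))}
    (hA : ∀ S ∈ A, S.card = k + r - 1) {x : ℕ} (hx1 : k + r - 1 ≤ x) (hx2 : x ≤ m)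
    (hcard : x.choose (k + r - 1) ≤ A.card) : x.choose (k - 1) ≤ (nbhdH m k A).card := by
  rw [nbhdH_eq_iter_shadow hk hA]
  have h := Finset.kruskal_katona_lovasz_form (n := m) (𝒜 := A) (i := r) (r := k + r - 1)
    (k := x) (by omega) hx1 hx2 (fun S hS => hA S hS) hcard
  have heq : k + r - 1 - r = k - 1 := by omega
  rw [heq] at h
  convert h using 2

end ShadowId

section Ball

/-- A combinatorial superset of the ball of radius 2 around `u` in `Hgraph`. -/
def Bset (m k r : ℕ) (u : Finset (Fin m)) : Finset (Finset (Fin m)) :=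
  insert u ((Finset.powersetCard (k - 1) u).biUnion fun T =>
    Finset.univ.filter fun w => w.card = k + r - 1 ∧ T ⊆ w)

lemma mem_Bset {m k r : ℕ} (hk : 1 ≤ k) (hr : 1 ≤ r) {u w : Finset (Fin m)}
    (hu : u.card = k + r - 1) (hw : w.card = k + r - 1)
    (h : distLE (Hgraph m k r) 2 u w) : w ∈ Bset m k r u := by
  obtain ⟨p, hp⟩ := h
  cases p with
  | nil => exact Finset.mem_insert_self _ _
  | cons h1 q =>
    rename_i b
    cases q with
    | nil =>
      exfalso
      rcases h1 with ⟨-, ⟨hc, -, -⟩ | ⟨hc, -, -⟩⟩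
      · rw [hu] at hc; omega
      · rw [hw] at hc; omega
    | cons h2 q2 =>
      cases q2 with
      | nil =>
        have hb : b.card = k - 1 ∧ b ⊆ u := by
          rcases h1 with ⟨-, ⟨hc, -, -⟩ | ⟨hc1, hc2, hc3⟩⟩
          · rw [hu] at hc; omega
          · exact ⟨hc1, hc3⟩
        have hbw : b ⊆ w := by
          rcases h2 with ⟨-, ⟨-, -, hc3⟩ | ⟨hc1, hc2, -⟩⟩
          · exact hc3
          · exfalso; rw [hw] at hc1; omega
        refine Finset.mem_insert_of_mem (Finset.mem_biUnion.2 ⟨b, ?_, ?_⟩)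
        · exact Finset.mem_powersetCard.2 ⟨hb.2, hb.1⟩
        · exact Finset.mem_filter.2 ⟨Finset.mem_univ _, hw, hbw⟩
      | cons h3 q3 =>
        exfalso
        simp only [SimpleGraph.Walk.length_cons] at hp
        omega

lemma superset_card_le {m k r : ℕ} (hk : 1 ≤ k) {T : Finset (Fin m)} (hT : T.card = k - 1) :
    (Finset.univ.filter fun w : Finset (Fin m) => w.card = k + r - 1 ∧ T ⊆ w).card ≤
      (m - (k - 1)).choose r := by
  classical
  have hinj : ∀ w₁ ∈ (Finset.univ.filter fun w : Finset (Fin m) => w.card = k + r - 1 ∧ T ⊆ w),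
      ∀ w₂ ∈ (Finset.univ.filter fun w : Finset (Fin m) => w.card = k + r - 1 ∧ T ⊆ w),
      w₁ \ T = w₂ \ T → w₁ = w₂ := by
    intro w₁ h₁ w₂ h₂ heq
    simp only [Finset.mem_filter] at h₁ h₂
    rw [← Finset.sdiff_union_of_subset h₁.2.2, ← Finset.sdiff_union_of_subset h₂.2.2, heq]
  have hmap : ∀ w ∈ (Finset.univ.filter fun w : Finset (Fin m) => w.card = k + r - 1 ∧ T ⊆ w),
      w \ T ∈ Finset.powersetCard r Tᶜ := by
    intro w hwmem
    simp only [Finset.mem_filter] at hwmem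
    obtain ⟨-, hwc, hTw⟩ := hwmem
    refine Finset.mem_powersetCard.2 ⟨?_, ?_⟩
    · intro a ha
      simp only [Finset.mem_sdiff] at ha
      simpa using ha.2
    · rw [Finset.card_sdiff_of_subset hTw, hwc, hT]
      omega
  calc (Finset.univ.filter fun w : Finset (Fin m) => w.card = k + r - 1 ∧ T ⊆ w).card
      ≤ (Finset.powersetCard r Tᶜ).card := Finset.card_le_card_of_injOn _ hmap hinj
    _ = Tᶜ.card.choose r := Finset.card_powersetCard r Tᶜ
    _ = (m - (k - 1)).choose r := by
        rw [Finset.card_compl, hT]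
        simp
end Ball

section ChooseBounds

lemma d_symm {k r : ℕ} (hk : 1 ≤ k) : (k + r - 1).choose (k - 1) = (k + r - 1).choose r := by
  have h := Nat.choose_symm (n := k + r - 1) (k := k - 1) (by omega)
  have heq : k + r - 1 - (k - 1) = r := by omega
  rw [heq] at h
  exact h.symm

lemma choose_kr_le {k r : ℕ} (hk : 1 ≤ k) (hr : 1 ≤ r) (hrk : 2 * r + 2 ≤ k) :
    (k + r).choose r ≤ 2 * (k + r - 1).choose r := by
  have h1 : (k + r - 1 + 1).choose (r - 1 + 1) =
      (k + r - 1).choose (r - 1) + (k + r - 1).choose (r - 1 + 1) :=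
    Nat.choose_succ_succ' _ _
  have e1 : k + r - 1 + 1 = k + r := by omega
  have e2 : r - 1 + 1 = r := by omega
  rw [e1, e2] at h1
  have h2 : (k + r - 1).choose (r - 1) ≤ (k + r - 1).choose r := by
    have := Nat.choose_le_succ_of_lt_half_left (r := r - 1) (n := k + r - 1) (by omega)
    rwa [e2] at this
  omega

lemma Bset_card_le {k r : ℕ} (hk : 1 ≤ k) (hr : 1 ≤ r) (hrk : 2 * r + 2 ≤ k)
    {u : Finset (Fin (2 * k + r - 1))} (hu : u.card = k + r - 1) :
    (Bset (2 * k + r - 1) k r u).card ≤ 3 * ((k + r - 1).choose (k - 1)) ^ 2 := by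
  classical
  set d := (k + r - 1).choose (k - 1) with hd
  have hd1 : 1 ≤ d := Nat.choose_pos (by omega)
  calc (Bset (2 * k + r - 1) k r u).card
      ≤ ((Finset.powersetCard (k - 1) u).biUnion fun T =>
          Finset.univ.filter fun w : Finset (Fin (2 * k + r - 1)) =>
            w.card = k + r - 1 ∧ T ⊆ w).card + 1 := Finset.card_insert_le _ _
    _ ≤ (∑ T ∈ Finset.powersetCard (k - 1) u,
          (Finset.univ.filter fun w : Finset (Fin (2 * k + r - 1)) =>
            w.card = k + r - 1 ∧ T ⊆ w).card) + 1 := by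
          exact Nat.add_le_add_right Finset.card_biUnion_le _
    _ ≤ (∑ _T ∈ Finset.powersetCard (k - 1) u, 2 * d) + 1 := by
          refine Nat.add_le_add_right (Finset.sum_le_sum fun T hT => ?_) _
          have hTc : T.card = k - 1 := (Finset.mem_powersetCard.1 hT).2
          refine le_trans (superset_card_le hk hTc) ?_
          have e3 : 2 * k + r - 1 - (k - 1) = k + r := by omega
          rw [e3, hd, d_symm hk]
          exact choose_kr_le hk hr hrk
    _ = d * (2 * d) + 1 := by
          rw [Finset.sum_const, smul_eq_mul, Finset.card_powersetCard, hu, ← hd ]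
    _ ≤ 3 * d ^ 2 := by nlinarith

lemma two_pow_le_d {k r : ℕ} (hk : 1 ≤ k) (hr : 1 ≤ r) (hrk : 2 * r ≤ k) :
    2 ^ r ≤ (k + r - 1).choose r := by
  have h := choose_climb (k + r - 1) 2 r 0 (fun i hi1 hi2 => by omega)
  simpa using h

lemma d_le_pow {k r : ℕ} (hrk : r ≤ k) : (k + r - 1).choose r ≤ (2 * k) ^ r :=
  le_trans (Nat.choose_le_pow _ _) (Nat.pow_le_pow_left (by omega) _)

end ChooseBounds

section Numerics

set_option maxHeartbeats 1000000 in
lemma numeric_facts {k r : ℕ} (hk : (10:ℝ)^16 ≤ (k:ℝ))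
    (h1 : 100 * Real.log k ≤ (r:ℝ)) (h2 : (r:ℝ) ≤ 2 + 2 * Real.sqrt (k * Real.log k)) :
    3600 ≤ r ∧ 90 * r + 1 ≤ k ∧ r^22 ≤ 27000000000 * k^13 ∧
      (k:ℝ)^5 ≤ (2:ℝ)^r ∧ (k:ℝ)^7 ≤ (8:ℝ)^r := by
  have hk0 : (0:ℝ) < k := lt_of_lt_of_le (by norm_num) hk
  have hk1 : (1:ℝ) ≤ k := le_trans (by norm_num) hk
  -- log k ≥ 36
  have hexp : Real.exp 36 ≤ (k:ℝ) := by
    have h36 : Real.exp 36 = Real.exp 1 ^ (36:ℕ) := by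
      rw [← Real.exp_nat_mul]; norm_num
    have he : Real.exp 1 ≤ 2.72 := le_trans (le_of_lt Real.exp_one_lt_d9) (by norm_num)
    have hpow : Real.exp 1 ^ (36:ℕ) ≤ (2.72:ℝ) ^ (36:ℕ) :=
      pow_le_pow_left₀ (le_of_lt (Real.exp_pos 1)) he 36
    have hnum : (2.72:ℝ) ^ (36:ℕ) ≤ (10:ℝ)^16 := by norm_num
    calc Real.exp 36 = Real.exp 1 ^ (36:ℕ) := h36
      _ ≤ (2.72:ℝ) ^ (36:ℕ) := hpow
      _ ≤ (10:ℝ)^16 := hnum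
      _ ≤ (k:ℝ) := hk
  have hlog : (36:ℝ) ≤ Real.log k := (Real.le_log_iff_exp_le hk0).2 hexp
  have hlog0 : (0:ℝ) ≤ Real.log k := le_trans (by norm_num) hlog
  -- r ≥ 3600
  have hr3600R : (3600:ℝ) ≤ (r:ℝ) := le_trans (by nlinarith) h1
  have hr3600 : 3600 ≤ r := by exact_mod_cast hr3600R
  have hrR0 : (0:ℝ) ≤ (r:ℝ) := le_trans (by norm_num) hr3600R
  -- v = k^(1/8)
  set v : ℝ := Real.sqrt (Real.sqrt (Real.sqrt k)) with hv
  have hv0 : (0:ℝ) ≤ v := Real.sqrt_nonneg _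
  have hv2 : v ^ 2 = Real.sqrt (Real.sqrt k) := Real.sq_sqrt (Real.sqrt_nonneg _)
  have hv4 : v ^ 4 = Real.sqrt k := by
    have := Real.sq_sqrt (Real.sqrt_nonneg (k:ℝ))
    calc v ^ 4 = (v ^ 2) ^ 2 := by ring
      _ = Real.sqrt (Real.sqrt k) ^ 2 := by rw [hv2]
      _ = Real.sqrt k := this
  have hv8 : v ^ 8 = (k:ℝ) := by
    have := Real.sq_sqrt (le_of_lt hk0)
    calc v ^ 8 = (v ^ 4) ^ 2 := by ring
      _ = Real.sqrt k ^ 2 := by rw [hv4]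
      _ = (k:ℝ) := this
  have hv100 : (100:ℝ) ≤ v := by
    have h8 : (100:ℝ) ^ 8 ≤ v ^ 8 := by
      rw [hv8]; exact le_trans (by norm_num) hk
    exact le_of_pow_le_pow_left₀ (by norm_num) hv0 h8
  have hv1 : (1:ℝ) ≤ v := le_trans (by norm_num) hv100
  -- log k ≤ 8 v
  have hlogv : Real.log k ≤ 8 * v := by
    have h1' : Real.log (v ^ 8) = 8 * Real.log v := by
      rw [Real.log_pow]; push_cast; ring
    have h2' : Real.log v ≤ v - 1 := Real.log_le_sub_one_of_pos (by linarith)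
    rw [← hv8, h1']
    nlinarith
  -- r² ≤ 72 v⁹
  have hv9 : (1:ℝ) ≤ v ^ 9 := by
    calc (1:ℝ) = 1 ^ 9 := by norm_num
      _ ≤ v ^ 9 := pow_le_pow_left₀ (by norm_num) hv1 9
  have hb2 : Real.sqrt ((k:ℝ) * Real.log k) ^ 2 = (k:ℝ) * Real.log k :=
    Real.sq_sqrt (by positivity)
  have hb0 : (0:ℝ) ≤ Real.sqrt ((k:ℝ) * Real.log k) := Real.sqrt_nonneg _
  have hklog : (k:ℝ) * Real.log k ≤ 8 * v ^ 9 := by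
    calc (k:ℝ) * Real.log k ≤ (k:ℝ) * (8 * v) := by
          exact mul_le_mul_of_nonneg_left hlogv (by positivity)
      _ = 8 * (v ^ 8 * v) := by rw [← hv8]; ring
      _ = 8 * v ^ 9 := by ring
  have hr2sq : (r:ℝ) ^ 2 ≤ 72 * v ^ 9 := by
    have hrle : (r:ℝ) ≤ 2 + 2 * Real.sqrt ((k:ℝ) * Real.log k) := h2
    nlinarith [sq_nonneg (Real.sqrt ((k:ℝ) * Real.log k) - 1)]
  -- (ii) 90 r + 1 ≤ k
  have hv5 : (10:ℝ)^10 ≤ v ^ 5 := by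
    calc (10:ℝ)^10 = 100 ^ 5 := by norm_num
      _ ≤ v ^ 5 := pow_le_pow_left₀ (by norm_num) hv100 5
  have h90 : 90 * r + 1 ≤ k := by
    have hs1 : (90 * (r:ℝ) + 1) ^ 2 ≤ 596232 * v ^ 9 := by nlinarith [hr2sq, hr3600R]
    have hs2 : (596232:ℝ) * v ^ 9 ≤ v ^ 5 * v ^ 9 := by
      refine mul_le_mul_of_nonneg_right ?_ (pow_nonneg hv0 9)
      linarith
    have hs3 : v ^ 5 * v ^ 9 ≤ v ^ 16 := by
      calc v ^ 5 * v ^ 9 = v ^ 14 := by ring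
        _ ≤ v ^ 16 := pow_le_pow_right₀ hv1 (by norm_num)
    have hR : (90 * (r:ℝ) + 1) ^ 2 ≤ (k:ℝ) ^ 2 := by
      have e1 : (k:ℝ) ^ 2 = v ^ 16 := by rw [← hv8]; ring
      rw [e1]; linarith
    have : 90 * (r:ℝ) + 1 ≤ (k:ℝ) := by
      refine le_of_pow_le_pow_left₀ (by norm_num) (le_of_lt hk0) hR
    exact_mod_cast this
  -- (iii) r^22 ≤ 27000000000 k^13
  have h22 : r ^ 22 ≤ 27000000000 * k ^ 13 := by
    have hR : (r:ℝ) ^ 22 * 10 ^ 10 ≤ 72 ^ 11 * (k:ℝ) ^ 13 := by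
      have e1 : (r:ℝ) ^ 22 = ((r:ℝ) ^ 2) ^ 11 := by ring
      have h1' : ((r:ℝ) ^ 2) ^ 11 ≤ (72 * v ^ 9) ^ 11 :=
        pow_le_pow_left₀ (by positivity) hr2sq 11
      have e2 : (72 * v ^ 9 : ℝ) ^ 11 = 72 ^ 11 * v ^ 99 := by ring
      have e3 : v ^ 99 * v ^ 5 = (k:ℝ) ^ 13 := by
        rw [← hv8]; ring
      calc (r:ℝ) ^ 22 * 10 ^ 10 ≤ (72 ^ 11 * v ^ 99) * v ^ 5 := by
            rw [e1]
            refine mul_le_mul (by rw [← e2]; exact h1') hv5 (by positivity) (by positivity)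
        _ = 72 ^ 11 * ((k:ℝ) ^ 13) := by rw [← e3]; ring
    have hc : (72:ℝ)^11 * (k:ℝ)^13 ≤ (27000000000 * 10^10) * (k:ℝ)^13 :=
      mul_le_mul_of_nonneg_right (by norm_num) (by positivity)
    have hR2 : (r:ℝ)^22 * 10^10 ≤ (27000000000 * (k:ℝ)^13) * 10^10 := by
      calc (r:ℝ)^22 * 10^10 ≤ 72^11 * (k:ℝ)^13 := hR
        _ ≤ (27000000000 * 10^10) * (k:ℝ)^13 := hc
        _ = (27000000000 * (k:ℝ)^13) * 10^10 := by ring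
    have hR3 : (r:ℝ)^22 ≤ 27000000000 * (k:ℝ)^13 :=
      le_of_mul_le_mul_right hR2 (by norm_num)
    exact_mod_cast hR3
  -- (iv) k^5 ≤ 2^r
  have hlog2 : (0.6931471803:ℝ) < Real.log 2 := Real.log_two_gt_d9
  have hk5 : (k:ℝ) ^ 5 ≤ (2:ℝ) ^ r := by
    rw [← Real.exp_log (show (0:ℝ) < (k:ℝ)^5 by positivity),
      ← Real.exp_log (show (0:ℝ) < (2:ℝ)^r by positivity)]
    rw [Real.exp_le_exp, Real.log_pow, Real.log_pow]
    push_cast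
    nlinarith
  have hk7 : (k:ℝ) ^ 7 ≤ (8:ℝ) ^ r := by
    rw [← Real.exp_log (show (0:ℝ) < (k:ℝ)^7 by positivity),
      ← Real.exp_log (show (0:ℝ) < (8:ℝ)^r by positivity)]
    rw [Real.exp_le_exp, Real.log_pow, Real.log_pow]
    have h8 : Real.log 8 = 3 * Real.log 2 := by
      rw [show (8:ℝ) = 2 ^ (3:ℕ) by norm_num, Real.log_pow]; push_cast; ring
    rw [h8]
    push_cast
    nlinarith
  exact ⟨hr3600, h90, h22, hk5, hk7⟩

end Numerics

section Master

/-- Key structural bound: a family of `(k+r-1)`-sets with small iterated shadow is small. -/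
lemma master_card_bound {k r g : ℕ} (hk : 1 ≤ k) (hr : 1 ≤ r) (h90 : 90 * r + 1 ≤ k)
    (hq11 : 8 * k ^ 3 + 1 ≤ ((k - 1 - r) / (11 * r)) ^ 11)
    {A : Finset (Finset (Fin (2 * k + r - 1)))}
    (hA : ∀ S ∈ A, S.card = k + r - 1) (hAne : A.Nonempty)
    (hg : (nbhdH (2 * k + r - 1) k A).card = g)
    (hgd : g ≤ ((k + r - 1).choose (k - 1)) ^ 3) :
    A.card * ((k - 1 - r) / (11 * r)) ^ r ≤ 2 * k * g := by
  classical
  set q := (k - 1 - r) / (11 * r) with hq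
  set s := k + r - 1 with hs
  set t := A.card with ht
  have ht1 : 1 ≤ t := Finset.card_pos.2 hAne
  have hq11r : q * (11 * r) ≤ k - 1 - r := Nat.div_mul_le_self _ _
  -- the branch `x = s + 10r` is impossible
  have hbranch : ¬ ((s + 10 * r).choose s ≤ t) := by
    intro hle
    have hKK : (s + 10 * r).choose (k - 1) ≤ g := by
      rw [← hg]
      exact shadow_lb hk hr hA (by omega) (by omega) hle
    have hCL3 : q ^ (11 * r) ≤ (s + 10 * r).choose (11 * r) := by
      have h := choose_climb (s + 10 * r) q (11 * r) 0 (fun i hi1 hi2 => by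
        have : q * (i + 1) ≤ q * (11 * r) := Nat.mul_le_mul_left _ (by omega)
        omega)
      simpa using h
    have hsymm : (s + 10 * r).choose (11 * r) = (s + 10 * r).choose (k - 1) := by
      have h := Nat.choose_symm (n := s + 10 * r) (k := 11 * r) (by omega)
      have e : s + 10 * r - 11 * r = k - 1 := by omega
      rw [e] at h
      exact h.symm
    -- now q^(11r) ≤ g but q^(11r) > (2k)^(3r) ≥ d^3 ≥ g
    have hbig : ((2 * k) ^ r) ^ 3 < q ^ (11 * r) := by
      calc ((2 * k) ^ r) ^ 3 = ((2 * k) ^ 3) ^ r := by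
            rw [← pow_mul, ← pow_mul, Nat.mul_comm r 3]
        _ < (q ^ 11) ^ r := by
            refine Nat.pow_lt_pow_left ?_ (by omega)
            have : (2 * k) ^ 3 = 8 * k ^ 3 := by ring
            omega
        _ = q ^ (11 * r) := by rw [← pow_mul]
    have hdg : g ≤ ((2 * k) ^ r) ^ 3 := by
      refine le_trans hgd (Nat.pow_le_pow_left ?_ _)
      rw [d_symm hk]
      exact d_le_pow (by omega)
    have := le_trans (hsymm ▸ hCL3) hKK
    omega
  -- choose the maximal `x` in `[s, s + 10r)` with `C(x, s) ≤ t`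
  have hXne : ((Finset.Icc s (s + 10 * r)).filter (fun x => x.choose s ≤ t)).Nonempty := by
    refine ⟨s, ?_⟩
    rw [Finset.mem_filter, Finset.mem_Icc, Nat.choose_self]
    exact ⟨⟨le_refl _, by omega⟩, ht1⟩
  obtain ⟨x, hxmem, hxmax'⟩ := Finset.exists_max_image _ id hXne
  rw [Finset.mem_filter, Finset.mem_Icc] at hxmem
  obtain ⟨⟨hxs, hxub⟩, hxle⟩ := hxmem
  have hxlt : x < s + 10 * r := by
    rcases Nat.lt_or_ge x (s + 10 * r) with h | h
    · exact h
    · exfalso; apply hbranch; have : x = s + 10 * r := by omega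
      rwa [this] at hxle
  have hxmax : ¬ ((x + 1).choose s ≤ t) := by
    intro hc
    have hmem1 : x + 1 ∈ (Finset.Icc s (s + 10 * r)).filter (fun x => x.choose s ≤ t) := by
      rw [Finset.mem_filter, Finset.mem_Icc]
      exact ⟨⟨by omega, by omega⟩, hc⟩
    have := hxmax' _ hmem1
    simp only [id] at this
    omega
  have htlt : t < (x + 1).choose s := by omega
  -- KK at x
  have hKK : x.choose (k - 1) ≤ g := by
    rw [← hg]
    exact shadow_lb hk hr hA hxs (by omega) hxle
  -- climb at x : q^r * C(x,s) ≤ C(x, k-1)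
  have hCL1 : q ^ r * x.choose s ≤ x.choose (k - 1) := by
    have h := choose_climb x q r (x - s) (fun i hi1 hi2 => by
      have h1 : q * (i + 1) ≤ q * (11 * r) := by
        refine Nat.mul_le_mul_left _ ?_
        omega
      omega)
    have e1 : x.choose (x - s) = x.choose s := Nat.choose_symm hxs
    have e2 : x - s + r = x - (k - 1) := by omega
    have e3 : x.choose (x - (k - 1)) = x.choose (k - 1) := Nat.choose_symm (by omega)
    rw [e1, e2, e3] at h
    exact h
  -- C(x+1, s) ≤ (s+1) * C(x, s)
  have hsucc : (x + 1).choose s ≤ (s + 1) * x.choose s := by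
    have h1 : (x + 1).choose (s - 1 + 1) = x.choose (s - 1) + x.choose (s - 1 + 1) :=
      Nat.choose_succ_succ' _ _
    have e2 : s - 1 + 1 = s := by omega
    rw [e2] at h1
    have h2 : x.choose (s - 1) ≤ x.choose s * s := by
      have h3 := Nat.choose_succ_right_eq x (s - 1)
      rw [e2] at h3
      calc x.choose (s - 1) ≤ x.choose (s - 1) * (x - (s - 1)) :=
            Nat.le_mul_of_pos_right _ (by omega)
        _ = x.choose s * s := h3.symm
    nlinarith [Nat.choose_pos (show s ≤ x from hxs)]
  -- put everything together
  have hts : t ≤ (s + 1) * x.choose s := by omega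
  calc t * q ^ r ≤ ((s + 1) * x.choose s) * q ^ r := Nat.mul_le_mul_right _ hts
    _ = (s + 1) * (q ^ r * x.choose s) := by ring
    _ ≤ (s + 1) * x.choose (k - 1) := Nat.mul_le_mul_left _ hCL1
    _ ≤ (s + 1) * g := Nat.mul_le_mul_left _ hKK
    _ ≤ 2 * k * g := Nat.mul_le_mul_right _ (by omega)

end Master

set_option maxHeartbeats 1000000 in
/-- the small case: for d ≤ g ≤ d³ the number of 2-linked families
A ⊆ L_{k+r-1} with |[A]| = a and |N(A)| = g is at most 2^(g/2). -/
theorem count_two_linked_small_case : ∃ K : ℕ, ∀ k : ℕ, K ≤ k → ∀ r n d a g : ℕ,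
    (100 * Real.log k ≤ (r : ℝ)) → ((r : ℝ) ≤ 2 + 2 * Real.sqrt (k * Real.log k)) →
    n = 2 * k + r → d = (k + r - 1).choose (k - 1) →
    1 ≤ a → a ≤ (2 * k + 3 * r / 4).choose (k + r - 1) →
    d ≤ g → g ≤ d ^ 3 →
    (Nat.card {A : Finset (Finset (Fin (n - 1))) //
        (∀ S ∈ A, S.card = k + r - 1) ∧ MLinked (Hgraph (n - 1) k r) 2 A ∧
        (closureH (n - 1) k r A).card = a ∧ (nbhdH (n - 1) k A).card = g} : ℝ) ≤
      (2 : ℝ) ^ ((g : ℝ) / 2) := by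
  classical
  refine ⟨10 ^ 16, ?_⟩
  intro k hK r n d a g hr1 hr2 hn hd ha1 ha2 hdg hgd3
  subst hn
  subst hd
  have hkR : (10:ℝ)^16 ≤ (k:ℝ) := by exact_mod_cast hK
  obtain ⟨hr3600, h90, h22, hk5, hk7⟩ := numeric_facts hkR hr1 hr2
  have hk1 : 1 ≤ k := by omega
  have hr1' : 1 ≤ r := by omega
  have hn1 : 2 * k + r - 1 = 2 * k + r - 1 := rfl
  set d := (k + r - 1).choose (k - 1) with hd
  set q := (k - 1 - r) / (11 * r) with hq
  have hd1 : 1 ≤ d := Nat.choose_pos (by omega)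
  have hg1 : 1 ≤ g := le_trans hd1 hdg
  -- q ≥ 8
  have hq8 : 8 ≤ q := by
    rw [hq, Nat.le_div_iff_mul_le (by omega)]
    omega
  have hq0 : 0 < q := by omega
  have hqr_pos : 0 < q ^ r := Nat.pow_pos hq0
  -- q * (22 r) ≥ k
  have hq22 : k ≤ q * (22 * r) := by
    have hmod := Nat.div_add_mod (k - 1 - r) (11 * r)
    have hmlt : (k - 1 - r) % (11 * r) < 11 * r := Nat.mod_lt _ (by omega)
    rw [← hq] at hmod
    have e : q * (22 * r) = 2 * (11 * r * q) := by ring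
    rw [e]
    generalize hQ : 11 * r * q = Q at hmod
    generalize hm2 : (k - 1 - r) % (11 * r) = m2 at hmod hmlt
    omega
  -- q^11 ≥ 8 k^3 + 1
  have hq11 : 8 * k ^ 3 + 1 ≤ q ^ 11 := by
    have h1 : k ^ 11 ≤ (q * (22 * r)) ^ 11 := Nat.pow_le_pow_left hq22 11
    have h2 : (q * (22 * r)) ^ 11 = q ^ 11 * (22 * r) ^ 11 := mul_pow _ _ _
    have h3 : (((8 * k ^ 3 + 1) * (22 * r) ^ 11) : ℕ) ^ 2 ≤ (k ^ 11) ^ 2 := by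
      have e1 : (((8 * k ^ 3 + 1) * (22 * r) ^ 11) : ℕ) ^ 2 =
          (8 * k ^ 3 + 1) ^ 2 * (22 ^ 22 * r ^ 22) := by ring
      have e2 : ((k:ℕ) ^ 11) ^ 2 = k ^ 22 := by ring
      rw [e1, e2]
      have h4 : (8 * k ^ 3 + 1) ^ 2 ≤ 81 * k ^ 6 := by
        have h36 : k ^ 3 ≤ k ^ 6 := Nat.pow_le_pow_right hk1 (by norm_num)
        have h03 : 1 ≤ k ^ 3 := Nat.one_le_pow _ _ (by omega)
        nlinarith
      calc (8 * k ^ 3 + 1) ^ 2 * (22 ^ 22 * r ^ 22)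
          ≤ (81 * k ^ 6) * (22 ^ 22 * (27000000000 * k ^ 13)) :=
            Nat.mul_le_mul h4 (Nat.mul_le_mul_left _ h22)
        _ = (81 * 22 ^ 22 * 27000000000) * k ^ 19 := by ring
        _ ≤ k ^ 3 * k ^ 19 := by
            refine Nat.mul_le_mul_right _ ?_
            calc (81 * 22 ^ 22 * 27000000000 : ℕ) ≤ (10 ^ 16) ^ 3 := by norm_num
              _ ≤ k ^ 3 := Nat.pow_le_pow_left hK 3
        _ = k ^ 22 := by ring
    have h5 : (8 * k ^ 3 + 1) * (22 * r) ^ 11 ≤ k ^ 11 :=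
      (Nat.pow_le_pow_iff_left (by norm_num)).1 h3
    have h6 : (8 * k ^ 3 + 1) * (22 * r) ^ 11 ≤ q ^ 11 * (22 * r) ^ 11 :=
      le_trans h5 (by rw [← h2]; exact h1)
    exact Nat.le_of_mul_le_mul_right h6 (by positivity)
  -- 2^r ≤ d and d ≤ 2^(r*(k+1))
  have h2rd : 2 ^ r ≤ d := by
    rw [hd, d_symm hk1]
    exact two_pow_le_d hk1 hr1' (by omega)
  have hd2 : d ≤ 2 ^ (r * (k + 1)) := by
    have h2k : 2 * k ≤ 2 ^ (k + 1) := by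
      have := Nat.lt_two_pow_self (n := k)
      calc 2 * k ≤ 2 * 2 ^ k := by omega
        _ = 2 ^ (k + 1) := by rw [pow_succ]; ring
    calc d = (k + r - 1).choose r := by rw [hd, d_symm hk1]
      _ ≤ (2 * k) ^ r := d_le_pow (by omega)
      _ ≤ (2 ^ (k + 1)) ^ r := Nat.pow_le_pow_left h2k _
      _ = 2 ^ (r * (k + 1)) := by rw [← pow_mul, Nat.mul_comm]
  -- k^5 ≤ g and k^7 ≤ q^r (ℕ)
  have hk5n : k ^ 5 ≤ g := by
    have h1 : ((k ^ 5 : ℕ) : ℝ) ≤ ((2 ^ r : ℕ) : ℝ) := by push_cast; exact hk5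
    have h2 : (k ^ 5 : ℕ) ≤ 2 ^ r := by exact_mod_cast h1
    exact le_trans h2 (le_trans h2rd hdg)
  have hk7n : k ^ 7 ≤ q ^ r := by
    have h1 : ((k ^ 7 : ℕ) : ℝ) ≤ ((8 ^ r : ℕ) : ℝ) := by push_cast; exact hk7
    have h2 : (k ^ 7 : ℕ) ≤ 8 ^ r := by exact_mod_cast h1
    exact le_trans h2 (Nat.pow_le_pow_left hq8 _)
  -- q^r ≤ d (climbing)
  have hq11r : q * (11 * r) ≤ k - 1 - r := by rw [hq]; exact Nat.div_mul_le_self _ _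
  have hqr_d : q ^ r ≤ d := by
    have h := choose_climb (k + r - 1) q r 0 (fun i hi1 hi2 => by
      have hstep : q * (i + 1) ≤ q * (11 * r) := Nat.mul_le_mul_left _ (by omega)
      omega)
    rw [hd, d_symm hk1]
    simpa using h
  set D := 3 * d ^ 2 with hD
  set M := 2 * k * g / q ^ r with hM
  have hM1 : 1 ≤ M := by
    rw [hM, Nat.le_div_iff_mul_le hqr_pos]
    have h1 : q ^ r ≤ g := le_trans hqr_d hdg
    calc 1 * q ^ r = q ^ r := one_mul _
      _ ≤ g := h1
      _ ≤ 2 * k * g := Nat.le_mul_of_pos_left _ (by omega)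
  have hD1 : 1 ≤ D := by rw [hD]; nlinarith [hd1]
  -- symmetry of the distance relation
  have hsym : Symmetric (fun u w : Finset (Fin (2 * k + r - 1)) =>
      distLE (Hgraph (2 * k + r - 1) k r) 2 u w) := by
    rintro u w ⟨p, hp⟩
    exact ⟨p.reverse, by rwa [SimpleGraph.Walk.length_reverse]⟩
  -- the counting family
  set Qp : Finset (Fin (2 * k + r - 1)) → Prop := fun v => v.card = k + r - 1 with hQp
  set 𝓕 := Finset.univ.filter (fun A : Finset (Finset (Fin (2 * k + r - 1))) =>
      (∀ S ∈ A, S.card = k + r - 1) ∧ MLinked (Hgraph (2 * k + r - 1) k r) 2 A ∧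
      (closureH (2 * k + r - 1) k r A).card = a ∧ (nbhdH (2 * k + r - 1) k A).card = g) with h𝓕
  -- Nat.card = filter card
  have hNat : (Nat.card {A : Finset (Finset (Fin (2 * k + r - 1))) //
      (∀ S ∈ A, S.card = k + r - 1) ∧ MLinked (Hgraph (2 * k + r - 1) k r) 2 A ∧
      (closureH (2 * k + r - 1) k r A).card = a ∧ (nbhdH (2 * k + r - 1) k A).card = g}) =
      𝓕.card := by
    rw [Nat.card_eq_fintype_card, h𝓕, Fintype.card_subtype]
  -- covering
  have hsub : 𝓕 ⊆ (Finset.univ ×ˢ Finset.range M).biUnion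
      (fun p => connFam (fun u w => distLE (Hgraph (2 * k + r - 1) k r) 2 u w) Qp p.1 p.2) := by
    intro A hA
    rw [h𝓕, Finset.mem_filter] at hA
    obtain ⟨-, hsized, hlinked, hclo, hnb⟩ := hA
    have hAne : A.Nonempty := by
      rcases Finset.eq_empty_or_nonempty A with h | h
      · exfalso
        rw [h] at hnb
        simp only [nbhdH, Finset.biUnion_empty, Finset.card_empty] at hnb
        omega
      · exact h
    have hApos : 1 ≤ A.card := Finset.card_pos.2 hAne
    have hAcard : A.card ≤ M := by
      rw [hM, Nat.le_div_iff_mul_le hqr_pos]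
      exact master_card_bound hk1 hr1' h90 hq11 hsized hAne hnb hgd3
    obtain ⟨v0, hv0⟩ := hAne
    refine Finset.mem_biUnion.2 ⟨(v0, A.card - 1), ?_, ?_⟩
    · rw [Finset.mem_product]
      exact ⟨Finset.mem_univ _, Finset.mem_range.2 (by omega)⟩
    · simp only [connFam, Finset.mem_filter]
      exact ⟨Finset.mem_univ _, hv0, by omega, hsized, hlinked⟩
  -- bound on each piece
  have hconnbound : ∀ p ∈ (Finset.univ ×ˢ Finset.range M),
      (connFam (fun u w => distLE (Hgraph (2 * k + r - 1) k r) 2 u w) Qp p.1 p.2).card ≤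
        (M * D) ^ M := by
    intro p hp
    rw [Finset.mem_product, Finset.mem_range] at hp
    have h1 := connFam_card_le hsym (Q := Qp) (B := Bset (2 * k + r - 1) k r)
      (fun u w hu hw h => mem_Bset hk1 hr1' hu hw h)
      (D := D) (fun u hu => by rw [hD]; exact Bset_card_le hk1 hr1' (by omega) hu)
      p.1 p.2
    calc (connFam (fun u w => distLE (Hgraph (2 * k + r - 1) k r) 2 u w) Qp p.1 p.2).card
        ≤ (p.2 * D) ^ p.2 := h1
      _ ≤ (M * D) ^ p.2 := Nat.pow_le_pow_left (Nat.mul_le_mul_right _ (le_of_lt hp.2)) _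
      _ ≤ (M * D) ^ M := Nat.pow_le_pow_right (by nlinarith [hM1, hD1]) (le_of_lt hp.2)
  -- exponents
  have h33 : 3 + k ≤ r * (k + 1) := by nlinarith [hr3600]
  have hM2 : M ≤ 2 ^ (1 + k + 3 * (r * (k + 1))) := by
    have h1 : M ≤ 2 * k * g := by rw [hM]; exact Nat.div_le_self _ _
    have hkk : k ≤ 2 ^ k := le_of_lt (Nat.lt_two_pow_self (n := k))
    have hg2 : g ≤ 2 ^ (3 * (r * (k + 1))) := by
      calc g ≤ d ^ 3 := hgd3
        _ ≤ (2 ^ (r * (k + 1))) ^ 3 := Nat.pow_le_pow_left hd2 _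
        _ = 2 ^ (3 * (r * (k + 1))) := by rw [← pow_mul, Nat.mul_comm]
    calc M ≤ 2 * k * g := h1
      _ ≤ 2 * 2 ^ k * 2 ^ (3 * (r * (k + 1))) :=
          Nat.mul_le_mul (Nat.mul_le_mul_left _ hkk) hg2
      _ = 2 ^ (1 + k + 3 * (r * (k + 1))) := by rw [pow_add, pow_add, pow_one]
  have hMD : M * D ≤ 2 ^ (6 * (r * (k + 1))) := by
    have hD2 : D ≤ 2 ^ (2 + 2 * (r * (k + 1))) := by
      calc D = 3 * d ^ 2 := hD
        _ ≤ 4 * d ^ 2 := by omega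
        _ ≤ 4 * (2 ^ (r * (k + 1))) ^ 2 := by
            have := Nat.pow_le_pow_left hd2 2
            omega
        _ = 2 ^ (2 + 2 * (r * (k + 1))) := by
            rw [pow_add, ← pow_mul, Nat.mul_comm (r * (k + 1)) 2]
            norm_num
    calc M * D ≤ 2 ^ (1 + k + 3 * (r * (k + 1))) * 2 ^ (2 + 2 * (r * (k + 1))) :=
          Nat.mul_le_mul hM2 hD2
      _ = 2 ^ (1 + k + 3 * (r * (k + 1)) + (2 + 2 * (r * (k + 1)))) := by rw [← pow_add]
      _ ≤ 2 ^ (6 * (r * (k + 1))) := Nat.pow_le_pow_right (by norm_num) (by omega)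
  -- the ℕ count bound
  have hchain : 𝓕.card ≤ 2 ^ (2 * k + r - 1 + (1 + k + 3 * (r * (k + 1))) +
      6 * (r * (k + 1)) * M) := by
    calc 𝓕.card ≤ ((Finset.univ ×ˢ Finset.range M).biUnion
          (fun p => connFam (fun u w => distLE (Hgraph (2 * k + r - 1) k r) 2 u w)
            Qp p.1 p.2)).card := Finset.card_le_card hsub
      _ ≤ ∑ p ∈ Finset.univ ×ˢ Finset.range M,
            (connFam (fun u w => distLE (Hgraph (2 * k + r - 1) k r) 2 u w) Qp p.1 p.2).card :=
          Finset.card_biUnion_le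
      _ ≤ (Finset.univ ×ˢ Finset.range M).card * (M * D) ^ M := by
          refine le_trans (Finset.sum_le_card_nsmul _ _ _ hconnbound) ?_
          rw [smul_eq_mul]
      _ = 2 ^ (2 * k + r - 1) * M * (M * D) ^ M := by
          rw [Finset.card_product, Finset.card_univ, Fintype.card_finset, Fintype.card_fin,
            Finset.card_range]
      _ ≤ 2 ^ (2 * k + r - 1) * 2 ^ (1 + k + 3 * (r * (k + 1))) * (2 ^ (6 * (r * (k + 1)))) ^ M :=
          Nat.mul_le_mul (Nat.mul_le_mul_left _ hM2) (Nat.pow_le_pow_left hMD _)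
      _ = 2 ^ (2 * k + r - 1 + (1 + k + 3 * (r * (k + 1))) + 6 * (r * (k + 1)) * M) := by
          rw [← pow_mul, ← pow_add, ← pow_add]
  -- the exponent is at most g/2
  have hMq : (M : ℝ) * (q : ℝ) ^ r ≤ 2 * (k : ℝ) * g := by
    have h1 : M * q ^ r ≤ 2 * k * g := by rw [hM]; exact Nat.div_mul_le_self _ _
    exact_mod_cast h1
  have hqrR : (0:ℝ) < (q:ℝ) ^ r := by positivity
  have hgR : (0:ℝ) ≤ (g:ℝ) := by positivity
  have hEr : ((2 * k + r - 1 + (1 + k + 3 * (r * (k + 1))) + 6 * (r * (k + 1)) * M : ℕ) : ℝ) ≤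
      (g : ℝ) / 2 := by
    have hk4 : 4 ≤ k := by omega
    have h96 : (96 : ℕ) ≤ k ^ 4 := le_trans (by norm_num) (Nat.pow_le_pow_left hk4 4)
    have hrk : r ≤ k := by omega
    have hm8 : (8 : ℕ) * (2 * k + r - 1) ≤ g := by
      have h1 : 8 * (2 * k + r - 1) ≤ 24 * k := by omega
      have h2 : 24 * k ≤ k ^ 5 := by
        calc 24 * k ≤ k ^ 4 * k := Nat.mul_le_mul_right _ (by omega)
          _ = k ^ 5 := by ring
      exact le_trans h1 (le_trans h2 hk5n)
    have he8 : (8 : ℕ) * (1 + k + 3 * (r * (k + 1))) ≤ g := by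
      have h0 : r * (k + 1) ≤ k * (k + 1) := Nat.mul_le_mul_right _ hrk
      have h1 : 8 * (1 + k + 3 * (r * (k + 1))) ≤ 8 * (1 + k + 3 * (k * (k + 1))) := by
        have h24 := Nat.mul_le_mul_left 3 h0
        omega
      have hkk : k ≤ k * k := Nat.le_mul_of_pos_right _ (by omega)
      have hkkk : k * k ≤ k * k * k := Nat.le_mul_of_pos_right _ (by omega)
      have hcube : k ≤ k * k * k := le_trans hkk hkkk
      have hone : 1 ≤ k * k * k := le_trans hk1 hcube
      have h2 : 8 * (1 + k + 3 * (k * (k + 1))) ≤ 64 * (k * k * k) := by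
        linarith [hone, hcube, hkkk]
      have h3 : 64 * (k * k * k) ≤ k ^ 7 := by
        calc 64 * (k * k * k) ≤ k ^ 4 * (k * k * k) := Nat.mul_le_mul_right _ (by omega)
          _ = k ^ 7 := by ring
      exact le_trans h1 (le_trans h2 (le_trans h3 (le_trans hk7n (le_trans hqr_d hdg))))
    have hqe : (48 : ℕ) * (r * (k + 1)) * k ≤ q ^ r := by
      have h0 : r * (k + 1) ≤ k * (k + 1) := Nat.mul_le_mul_right _ hrk
      have h0k : r * (k + 1) * k ≤ k * (k + 1) * k := Nat.mul_le_mul_right _ h0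
      have hkkk2 : k * k ≤ k * k * k := Nat.le_mul_of_pos_right _ (by omega)
      have h1 : 48 * (r * (k + 1)) * k ≤ 96 * (k * k * k) := by
        linarith [h0k, hkkk2]
      have h2 : 96 * (k * k * k) ≤ k ^ 7 := by
        calc 96 * (k * k * k) ≤ k ^ 4 * (k * k * k) := Nat.mul_le_mul_right _ h96
          _ = k ^ 7 := by ring
      exact le_trans h1 (le_trans h2 hk7n)
    have hterm3 : 4 * ((6 * (r * (k + 1)) * M : ℕ) : ℝ) ≤ (g : ℝ) := by
      have hqeR : ((48 * (r * (k + 1)) * k : ℕ) : ℝ) ≤ ((q : ℝ)) ^ r := by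
        push_cast
        exact_mod_cast hqe
      have key : (4 * ((6 * (r * (k + 1)) * M : ℕ) : ℝ)) * ((q:ℝ) ^ r) ≤ (g:ℝ) * ((q:ℝ) ^ r) := by
        push_cast
        calc 4 * (6 * ((r:ℝ) * ((k:ℝ) + 1)) * (M:ℝ)) * ((q:ℝ) ^ r)
            = (24 * ((r:ℝ) * ((k:ℝ) + 1))) * ((M:ℝ) * (q:ℝ) ^ r) := by ring
          _ ≤ (24 * ((r:ℝ) * ((k:ℝ) + 1))) * (2 * (k:ℝ) * g) := by
              refine mul_le_mul_of_nonneg_left hMq (by positivity)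
          _ = (48 * ((r:ℝ) * ((k:ℝ) + 1)) * (k:ℝ)) * (g:ℝ) := by ring
          _ ≤ ((q:ℝ) ^ r) * (g:ℝ) := by
              refine mul_le_mul_of_nonneg_right ?_ hgR
              push_cast at hqeR ⊢
              linarith
          _ = (g:ℝ) * ((q:ℝ) ^ r) := by ring
      exact le_of_mul_le_mul_right key hqrR
    have h1R : ((2 * k + r - 1 : ℕ) : ℝ) ≤ (g:ℝ) / 8 := by
      have := hm8
      have hc : ((8 * (2 * k + r - 1) : ℕ) : ℝ) ≤ (g : ℝ) := by exact_mod_cast this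
      push_cast at hc
      linarith
    have h2R : ((1 + k + 3 * (r * (k + 1)) : ℕ) : ℝ) ≤ (g:ℝ) / 8 := by
      have hc : ((8 * (1 + k + 3 * (r * (k + 1))) : ℕ) : ℝ) ≤ (g : ℝ) := by exact_mod_cast he8
      push_cast at hc ⊢
      linarith
    have h3R : ((6 * (r * (k + 1)) * M : ℕ) : ℝ) ≤ (g:ℝ) / 4 := by linarith
    push_cast
    push_cast at h1R h2R h3R
    linarith
  -- finish
  rw [hNat]
  have hfin1 : (𝓕.card : ℝ) ≤ ((2 : ℕ) : ℝ) ^ (2 * k + r - 1 + (1 + k + 3 * (r * (k + 1))) +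
      6 * (r * (k + 1)) * M) := by exact_mod_cast hchain
  have hfin2 : ((2 : ℕ) : ℝ) ^ (2 * k + r - 1 + (1 + k + 3 * (r * (k + 1))) +
      6 * (r * (k + 1)) * M) ≤ (2 : ℝ) ^ ((g : ℝ) / 2) := by
    have e1 : ((2 : ℕ) : ℝ) ^ (2 * k + r - 1 + (1 + k + 3 * (r * (k + 1))) +
        6 * (r * (k + 1)) * M) = (2 : ℝ) ^ (((2 * k + r - 1 + (1 + k + 3 * (r * (k + 1))) +
        6 * (r * (k + 1)) * M : ℕ) : ℝ)) := by
      rw [Real.rpow_natCast]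
      norm_num
    rw [e1]
    exact Real.rpow_le_rpow_of_exponent_le one_le_two hEr
  exact le_trans hfin1 hfin2
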